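/- Fix Σ̂ ∈ S_+^d and ρ ≥ 0. Every Σ in the set S = {Σ ∈ S_+^d : Tr[Σ + Σ̂ - 2(Σ̂^{1/2} Σ Σ̂^{1/2})^{1/2}] ≤ ρ^2} satisfies Tr[Σ] ≤ (ρ + Tr[Σ̂]^{1/2})^2; moreover S is convex and compact. -/

import Mathlib

open Matrix
noncomputable section
open scoped Classical

/-- Positive semidefinite square root (0 if not PSD). -/
def psdSqrt {d : ℕ} (A : Matrix (Fin d) (Fin d) ℝ) : Matrix (Fin d) (Fin d) ℝ :=
  if h : A.PosSemidef then
    h.1.eigenvectorUnitary.1 * diagonal (Real.sqrt ∘ h.1.eigenvalues) *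
      (star h.1.eigenvectorUnitary : Matrix (Fin d) (Fin d) ℝ)
  else 0

/-- Frobenius norm. -/
def frob {d : ℕ} (A : Matrix (Fin d) (Fin d) ℝ) : ℝ := Real.sqrt (Aᵀ * A).trace

/-- Trace inner product. -/
def ip {d : ℕ} (A B : Matrix (Fin d) (Fin d) ℝ) : ℝ := (Aᵀ * B).trace

/-- Largest eigenvalue of a symmetric matrix (0 if not symmetric). -/
def lamMax {d : ℕ} (A : Matrix (Fin d) (Fin d) ℝ) : ℝ :=
  if h : A.IsHermitian then ⨆ i, h.eigenvalues i else 0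

/-- Smallest eigenvalue of a symmetric matrix (0 if not symmetric). -/
def lamMin {d : ℕ} (A : Matrix (Fin d) (Fin d) ℝ) : ℝ :=
  if h : A.IsHermitian then ⨅ i, h.eigenvalues i else 0

/-- Gelbrich distance between two mean–covariance pairs. -/
def gelbrich {d : ℕ} (μ₁ μ₂ : EuclideanSpace ℝ (Fin d))
    (S₁ S₂ : Matrix (Fin d) (Fin d) ℝ) : ℝ :=
  Real.sqrt (‖μ₁ - μ₂‖ ^ 2 + (S₁ + S₂ - 2 • psdSqrt (psdSqrt S₂ * S₁ * psdSqrt S₂)).trace)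

namespace Matrix.PosSemidef

/-- The PSD square root built from the spectral decomposition. -/
def sqrt {d : ℕ} {A : Matrix (Fin d) (Fin d) ℝ} (h : A.PosSemidef) : Matrix (Fin d) (Fin d) ℝ :=
  h.1.eigenvectorUnitary.1 * diagonal (Real.sqrt ∘ h.1.eigenvalues) *
    (star h.1.eigenvectorUnitary : Matrix (Fin d) (Fin d) ℝ)

lemma posSemidef_sqrt {d : ℕ} {A : Matrix (Fin d) (Fin d) ℝ} (h : A.PosSemidef) :
    h.sqrt.PosSemidef := by
  have hD : (diagonal (Real.sqrt ∘ h.1.eigenvalues)).PosSemidef :=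
    Matrix.PosSemidef.diagonal fun i => Real.sqrt_nonneg _
  have := hD.mul_mul_conjTranspose_same (h.1.eigenvectorUnitary.1)
  unfold sqrt
  rwa [Matrix.star_eq_conjTranspose]

lemma sqrt_mul_self {d : ℕ} {A : Matrix (Fin d) (Fin d) ℝ} (h : A.PosSemidef) :
    h.sqrt * h.sqrt = A := by
  set U := h.1.eigenvectorUnitary with hU
  have hUU : (star U : Matrix (Fin d) (Fin d) ℝ) * U.1 = 1 := by
    exact Unitary.star_mul_self_of_mem U.2
  have hspec := h.1.spectral_theorem
  rw [Unitary.conjStarAlgAut_apply] at hspec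
  unfold sqrt
  conv_rhs => rw [hspec]
  rw [← hU]
  have hdd : diagonal (Real.sqrt ∘ h.1.eigenvalues) * diagonal (Real.sqrt ∘ h.1.eigenvalues)
      = diagonal (RCLike.ofReal ∘ h.1.eigenvalues) := by
    rw [diagonal_mul_diagonal]
    congr 1
    funext i
    simp [Real.mul_self_sqrt (h.eigenvalues_nonneg i)]
  calc U.1 * diagonal (Real.sqrt ∘ h.1.eigenvalues) * (star U : Matrix (Fin d) (Fin d) ℝ) *
        (U.1 * diagonal (Real.sqrt ∘ h.1.eigenvalues) * (star U : Matrix (Fin d) (Fin d) ℝ))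
      = U.1 * diagonal (Real.sqrt ∘ h.1.eigenvalues) * ((star U : Matrix (Fin d) (Fin d) ℝ) *
        U.1) * diagonal (Real.sqrt ∘ h.1.eigenvalues) * (star U : Matrix (Fin d) (Fin d) ℝ) := by
        simp only [Matrix.mul_assoc]
    _ = _ := by rw [hUU, Matrix.mul_one, Matrix.mul_assoc _ (diagonal _) (diagonal _), hdd]

end Matrix.PosSemidef

namespace GelbrichAux
variable {d : ℕ}

lemma hermT {A : Matrix (Fin d) (Fin d) ℝ} (h : A.IsHermitian) : Aᵀ = A := by
  rw [← conjTranspose_eq_transpose_of_trivial]; exact h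

lemma conjPSD (A : Matrix (Fin d) (Fin d) ℝ) {X : Matrix (Fin d) (Fin d) ℝ}
    (hX : X.PosSemidef) : (A * X * Aᵀ).PosSemidef := by
  simpa [conjTranspose_eq_transpose_of_trivial] using hX.mul_mul_conjTranspose_same A

lemma smulPSD {c : ℝ} (hc : 0 ≤ c) {A : Matrix (Fin d) (Fin d) ℝ}
    (hA : A.PosSemidef) : (c • A).PosSemidef := by
  exact hA.smul hc

lemma smulOnePD {t : ℝ} (ht : 0 < t) : (t • (1 : Matrix (Fin d) (Fin d) ℝ)).PosDef := by
  exact Matrix.PosDef.one.smul ht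

lemma tracePSD_nonneg {A : Matrix (Fin d) (Fin d) ℝ} (hA : A.PosSemidef) : 0 ≤ A.trace := by
  have h : ∀ i, 0 ≤ A i i := fun i => by
    have := hA.dotProduct_mulVec_nonneg (Pi.single i 1)
    simpa [Matrix.mulVec_single, single_dotProduct] using this
  exact Finset.sum_nonneg fun i _ => h i

lemma traceMul_nonneg {A B : Matrix (Fin d) (Fin d) ℝ} (hA : A.PosSemidef)
    (hB : B.PosSemidef) : 0 ≤ (A * B).trace := by
  have h1 : (A * B).trace = (hA.sqrt * B * hA.sqrt).trace := by
    conv_lhs => rw [← hA.sqrt_mul_self]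
    rw [Matrix.trace_mul_cycle, Matrix.trace_mul_cycle, Matrix.mul_assoc]
  have h2 : (hA.sqrt * B * hA.sqrt).PosSemidef := by
    have := conjPSD hA.sqrt hB
    rwa [hermT hA.posSemidef_sqrt.1] at this
  rw [h1]; exact tracePSD_nonneg h2

lemma traceMul_mono {P Q S : Matrix (Fin d) (Fin d) ℝ} (h : (Q - P).PosSemidef)
    (hS : S.PosSemidef) : (P * S).trace ≤ (Q * S).trace := by
  have := traceMul_nonneg h hS
  rw [Matrix.sub_mul, Matrix.trace_sub] at this; linarith

lemma conjPD {A X : Matrix (Fin d) (Fin d) ℝ} (hA : IsUnit A.det) (hX : X.PosDef) :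
    (A * X * Aᵀ).PosDef := by
  refine Matrix.PosDef.of_dotProduct_mulVec_pos (conjPSD A hX.posSemidef).1 fun x hx => ?_
  have hinj : Function.Injective (Aᵀ).mulVec := by
    rw [Matrix.mulVec_injective_iff_isUnit]
    exact (Matrix.isUnit_iff_isUnit_det _).mpr (by rwa [Matrix.det_transpose])
  have hv : Aᵀ *ᵥ x ≠ 0 := fun h0 => hx (hinj (by simpa using h0))
  have h2 := hX.dotProduct_mulVec_pos hv
  have he : A * X * Aᵀ = (Aᵀ)ᴴ * X * Aᵀ := by
    rw [conjTranspose_eq_transpose_of_trivial, transpose_transpose]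
  rw [he]
  simpa only [star_mulVec, Matrix.dotProduct_mulVec, Matrix.vecMul_vecMul] using h2


lemma sqrt_det_isUnit {Z : Matrix (Fin d) (Fin d) ℝ} (hZ : Z.PosDef) :
    IsUnit (hZ.posSemidef.sqrt).det := by
  have h : hZ.posSemidef.sqrt.det * hZ.posSemidef.sqrt.det = Z.det := by
    rw [← Matrix.det_mul, hZ.posSemidef.sqrt_mul_self]
  have hzd : Z.det ≠ 0 := hZ.det_pos.ne'
  exact isUnit_iff_ne_zero.mpr (fun h0 => hzd (by rw [← h, h0, mul_zero]))

lemma key_lb {B S Z : Matrix (Fin d) (Fin d) ℝ} (hB : B.PosSemidef) (hS : S.PosSemidef)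
    (hZ : Z.PosDef) :
    2 * (psdSqrt (psdSqrt B * S * psdSqrt B)).trace ≤ (Z * S).trace + (Z⁻¹ * B).trace := by
  have hPB : psdSqrt B = hB.sqrt := dif_pos hB
  set P := hB.sqrt with hPdef
  have hPsd : P.PosSemidef := hB.posSemidef_sqrt
  have hPT : Pᵀ = P := hermT hPsd.1
  have hPP : P * P = B := hB.sqrt_mul_self
  rw [hPB]
  have hM : (P * S * P).PosSemidef := by have := conjPSD P hS; rwa [hPT] at this
  have hMC : psdSqrt (P * S * P) = hM.sqrt := dif_pos hM
  rw [hMC]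
  set C := hM.sqrt with hCdef
  have hCsd : C.PosSemidef := hM.posSemidef_sqrt
  have hCT : Cᵀ = C := hermT hCsd.1
  have hCC : C * C = P * S * P := hM.sqrt_mul_self
  have main : ∀ ε : ℝ, 0 < ε →
      2 * C.trace ≤ (Z * S).trace + (Z⁻¹ * B).trace + ε * d := by
    intro ε hε
    set W := hZ.posSemidef.sqrt with hWdef
    have hWsd : W.PosSemidef := hZ.posSemidef.posSemidef_sqrt
    have hWT : Wᵀ = W := hermT hWsd.1
    have hWW : W * W = Z := hZ.posSemidef.sqrt_mul_self
    have hWdet : IsUnit W.det := sqrt_det_isUnit hZ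
    have hWmul' : W⁻¹ * W = 1 := Matrix.nonsing_inv_mul _ hWdet
    have hWiT : (W⁻¹)ᵀ = W⁻¹ := by rw [Matrix.transpose_nonsing_inv, hWT]
    have hZinv : Z⁻¹ = W⁻¹ * W⁻¹ := by rw [← hWW, Matrix.mul_inv_rev]
    set N := P * W⁻¹ with hNdef
    have hNNt : N * Nᵀ = P * Z⁻¹ * P := by
      rw [hNdef, Matrix.transpose_mul, hWiT, hPT, hZinv]
      simp only [Matrix.mul_assoc]
    set K := P * Z⁻¹ * P + ε • (1 : Matrix (Fin d) (Fin d) ℝ) with hKdef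
    have hPZP : (P * Z⁻¹ * P).PosSemidef := by
      have := conjPSD P hZ.inv.posSemidef; rwa [hPT] at this
    have hK : K.PosDef := Matrix.PosDef.posSemidef_add hPZP (smulOnePD hε)
    have hKdet : IsUnit K.det := isUnit_iff_ne_zero.mpr hK.det_pos.ne'
    have hKK : K * K⁻¹ = 1 := Matrix.mul_nonsing_inv _ hKdet
    have hK'K : K⁻¹ * K = 1 := Matrix.nonsing_inv_mul _ hKdet
    have hKT : Kᵀ = K := hermT hK.isHermitian
    -- Step A
    have hstepA : 2 * C.trace ≤ (C * K⁻¹ * C).trace + K.trace := by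
      have hpsd : ((C - K) * K⁻¹ * (C - K)).PosSemidef := by
        have := conjPSD (C - K) hK.inv.posSemidef
        rwa [Matrix.transpose_sub, hCT, hKT] at this
      have h1 : C * K⁻¹ * K = C := by rw [Matrix.mul_assoc, hK'K, Matrix.mul_one]
      have hexp : (C - K) * K⁻¹ * (C - K) = C * K⁻¹ * C - C - C + K := by
        calc (C - K) * K⁻¹ * (C - K) = (C * K⁻¹ - 1) * (C - K) := by
              rw [Matrix.sub_mul, hKK]
          _ = C * K⁻¹ * C - C * K⁻¹ * K - (1 * C - 1 * K) := by
              rw [Matrix.sub_mul, Matrix.mul_sub, Matrix.mul_sub]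
          _ = C * K⁻¹ * C - C - C + K := by rw [h1, Matrix.one_mul, Matrix.one_mul]; abel
      have h0 := tracePSD_nonneg hpsd
      rw [hexp, Matrix.trace_add, Matrix.trace_sub, Matrix.trace_sub] at h0
      linarith
    -- Steps B/C
    have hBC : (C * K⁻¹ * C).trace = ((P * K⁻¹ * P) * S).trace := by
      rw [Matrix.trace_mul_cycle, hCC, Matrix.trace_mul_cycle, Matrix.trace_mul_cycle]
      simp only [Matrix.mul_assoc]
    -- Step D
    have hDiff : (Z - P * K⁻¹ * P).PosSemidef := by
      set L := Nᵀ * N + ε • (1 : Matrix (Fin d) (Fin d) ℝ) with hLdef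
      have hNtN : (Nᵀ * N).PosSemidef := by
        have := conjPSD Nᵀ Matrix.PosSemidef.one
        simpa [Matrix.mul_one] using this
      have hL : L.PosDef := Matrix.PosDef.posSemidef_add hNtN (smulOnePD hε)
      have hLdet : IsUnit L.det := isUnit_iff_ne_zero.mpr hL.det_pos.ne'
      have hLL : L * L⁻¹ = 1 := Matrix.mul_nonsing_inv _ hLdet
      have hpush : K⁻¹ * N = N * L⁻¹ := by
        have h0 : N * L = K * N := by
          rw [hLdef, hKdef, Matrix.mul_add, Matrix.add_mul, ← Matrix.mul_assoc, hNNt,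
            Matrix.mul_smul, Matrix.mul_one, Matrix.smul_mul, Matrix.one_mul]
        calc K⁻¹ * N = K⁻¹ * (N * L) * L⁻¹ := by
              rw [Matrix.mul_assoc, Matrix.mul_assoc, hLL, Matrix.mul_one]
          _ = K⁻¹ * (K * N) * L⁻¹ := by rw [h0]
          _ = N * L⁻¹ := by rw [← Matrix.mul_assoc, ← Matrix.mul_assoc, hK'K, Matrix.one_mul]
      have hPNW : P = N * W := by rw [hNdef, Matrix.mul_assoc, hWmul', Matrix.mul_one]
      have hPWN : P = W * Nᵀ := by
        conv_lhs => rw [← hPT, hPNW]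
        rw [Matrix.transpose_mul, hWT]
      have h3 : Nᵀ * (N * L⁻¹) + ε • L⁻¹ = 1 := by
        rw [← hLL, hLdef, Matrix.add_mul, Matrix.smul_mul, Matrix.one_mul]
        simp only [hNdef, Matrix.mul_assoc]
      have h2 : (1 : Matrix (Fin d) (Fin d) ℝ) - Nᵀ * (N * L⁻¹) = ε • L⁻¹ := by
        rw [← h3]; abel
      have h1 : P * K⁻¹ * P = W * (Nᵀ * (N * L⁻¹)) * W := by
        calc P * K⁻¹ * P = (W * Nᵀ) * K⁻¹ * (N * W) := by rw [← hPWN, ← hPNW]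
          _ = W * (Nᵀ * (K⁻¹ * N)) * W := by simp only [Matrix.mul_assoc]
          _ = W * (Nᵀ * (N * L⁻¹)) * W := by rw [hpush]
      have hid : Z - P * K⁻¹ * P = W * (ε • L⁻¹) * Wᵀ := by
        rw [h1, ← hWW, hWT]
        calc W * W - W * (Nᵀ * (N * L⁻¹)) * W
            = W * ((1 : Matrix (Fin d) (Fin d) ℝ) - Nᵀ * (N * L⁻¹)) * W := by
              rw [Matrix.mul_sub, Matrix.sub_mul, Matrix.mul_one]
          _ = W * (ε • L⁻¹) * W := by rw [h2]
      rw [hid]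
      exact conjPSD W (smulPSD hε.le hL.inv.posSemidef)
    have hD2 : ((P * K⁻¹ * P) * S).trace ≤ (Z * S).trace := traceMul_mono hDiff hS
    have hE : K.trace = (Z⁻¹ * B).trace + ε * ↑d := by
      have e1 : (P * Z⁻¹ * P).trace = (Z⁻¹ * B).trace := by
        rw [Matrix.trace_mul_cycle, hPP, Matrix.trace_mul_comm]
      rw [hKdef, Matrix.trace_add, Matrix.trace_smul, Matrix.trace_one, e1]
      simp [smul_eq_mul]
    linarith [hstepA, hBC, hD2, hE]
  refine le_of_forall_pos_le_add fun ε hε => ?_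
  have h := main (ε / (↑d + 1)) (by positivity)
  have hd : (ε / (↑d + 1)) * ↑d ≤ ε := by
    rw [div_mul_eq_mul_div, div_le_iff₀ (by positivity)]
    nlinarith [hε.le, Nat.cast_nonneg (α := ℝ) d]
  linarith


set_option maxHeartbeats 1000000 in
lemma key_ub {B S : Matrix (Fin d) (Fin d) ℝ} (hB : B.PosSemidef) (hS : S.PosSemidef)
    {δ : ℝ} (hδ : 0 < δ) :
    ∃ Z : Matrix (Fin d) (Fin d) ℝ, Z.PosDef ∧
      (Z * S).trace + (Z⁻¹ * B).trace
        ≤ 2 * (psdSqrt (psdSqrt B * S * psdSqrt B)).trace + δ := by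
  have hPB : psdSqrt B = hB.sqrt := dif_pos hB
  set P := hB.sqrt with hPdef
  have hPsd : P.PosSemidef := hB.posSemidef_sqrt
  have hPT : Pᵀ = P := hermT hPsd.1
  have hPP : P * P = B := hB.sqrt_mul_self
  rw [hPB]
  have hM : (P * S * P).PosSemidef := by have := conjPSD P hS; rwa [hPT] at this
  have hMC : psdSqrt (P * S * P) = hM.sqrt := dif_pos hM
  rw [hMC]
  set C := hM.sqrt with hCdef
  have hCsd : C.PosSemidef := hM.posSemidef_sqrt
  have hCT : Cᵀ = C := hermT hCsd.1
  have hCC : C * C = P * (S * P) := by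
    rw [← Matrix.mul_assoc]
    exact hM.sqrt_mul_self
  have hCtr : 0 ≤ C.trace := tracePSD_nonneg hCsd
  have hStr : 0 ≤ S.trace := tracePSD_nonneg hS
  clear_value C
  clear_value P
  -- parameters
  obtain ⟨θ, hθ, hθdef⟩ : ∃ t : ℝ, 0 < t ∧ t = δ / (3 * (C.trace + 1)) :=
    ⟨_, by positivity, rfl⟩
  obtain ⟨b, hb, hbdef⟩ : ∃ t : ℝ, 0 < t ∧ t = δ / (3 * ((d : ℝ) + 1)) :=
    ⟨_, by positivity, rfl⟩
  obtain ⟨a, ha, ha2⟩ : ∃ t : ℝ, 0 < t ∧ t * t = θ * b * δ / (3 * (θ + 1) * (S.trace + 1)) :=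
    ⟨Real.sqrt _, Real.sqrt_pos.mpr (by positivity), Real.mul_self_sqrt (by positivity)⟩
  -- matrices
  set Pa := P + a • (1 : Matrix (Fin d) (Fin d) ℝ) with hPadef
  have hPa : Pa.PosDef := Matrix.PosDef.posSemidef_add hPsd (smulOnePD ha)
  have hPaT : Paᵀ = Pa := hermT hPa.isHermitian
  have hPadet : IsUnit Pa.det := isUnit_iff_ne_zero.mpr hPa.det_pos.ne'
  have hPaL : Pa⁻¹ * Pa = 1 := Matrix.nonsing_inv_mul _ hPadet
  have hPaR : Pa * Pa⁻¹ = 1 := Matrix.mul_nonsing_inv _ hPadet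
  have hPaiT : (Pa⁻¹)ᵀ = Pa⁻¹ := by rw [Matrix.transpose_nonsing_inv, hPaT]
  set Cb := C + b • (1 : Matrix (Fin d) (Fin d) ℝ) with hCbdef
  have hCb : Cb.PosDef := Matrix.PosDef.posSemidef_add hCsd (smulOnePD hb)
  have hCbT : Cbᵀ = Cb := hermT hCb.isHermitian
  have hCbdet : IsUnit Cb.det := isUnit_iff_ne_zero.mpr hCb.det_pos.ne'
  set D := Cb⁻¹ with hDdef
  have hD : D.PosDef := hCb.inv
  have hDC : D * Cb = 1 := Matrix.nonsing_inv_mul _ hCbdet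
  have hCD : Cb * D = 1 := Matrix.mul_nonsing_inv _ hCbdet
  have hDT : Dᵀ = D := hermT hD.isHermitian
  refine ⟨Pa * D * Pa, ?_, ?_⟩
  · have := conjPD hPadet hD
    rwa [hPaT] at this
  -- inverse
  have hZinv : (Pa * D * Pa)⁻¹ = Pa⁻¹ * (Cb * Pa⁻¹) := by
    rw [Matrix.mul_inv_rev, Matrix.mul_inv_rev, hDdef,
      Matrix.nonsing_inv_nonsing_inv _ hCbdet]
  -- T1
  have q4 : (Pa * D * Pa * S).trace = (D * (Pa * (S * Pa))).trace := by
    simp only [Matrix.mul_assoc]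
    rw [Matrix.trace_mul_comm]
    simp only [Matrix.mul_assoc]
  -- expansion of Pa * (S * Pa)
  have hexp : Pa * (S * Pa) =
      P * (S * P) + a • (P * S) + a • (S * P) + (a * a) • S := by
    rw [hPadef]
    simp only [Matrix.add_mul, Matrix.mul_add, Matrix.smul_mul, Matrix.mul_smul,
      Matrix.one_mul, Matrix.mul_one, smul_smul, smul_add]
    abel
  -- the comparison matrix
  set X := Real.sqrt θ • P - (a / Real.sqrt θ) • (1 : Matrix (Fin d) (Fin d) ℝ) with hXdef
  have hXT : Xᵀ = X := by
    rw [hXdef, Matrix.transpose_sub, Matrix.transpose_smul, Matrix.transpose_smul, hPT,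
      Matrix.transpose_one]
  have hsq : Real.sqrt θ ≠ 0 := (Real.sqrt_pos.mpr hθ).ne'
  have e1 : Real.sqrt θ * Real.sqrt θ = θ := Real.mul_self_sqrt hθ.le
  have e2 : Real.sqrt θ * (a / Real.sqrt θ) = a := by field_simp
  have e4 : a / Real.sqrt θ * Real.sqrt θ = a := by field_simp
  have e3 : a / Real.sqrt θ * (a / Real.sqrt θ) = a * a / θ := by
    rw [div_mul_div_comm, e1]
  have hXexp : X * (S * X) =
      θ • (P * (S * P)) + (a * a / θ) • S - a • (P * S) - a • (S * P) := by
    have hXS : X * S = Real.sqrt θ • (P * S) - (a / Real.sqrt θ) • S := by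
      rw [hXdef, Matrix.sub_mul, Matrix.smul_mul, Matrix.smul_mul, Matrix.one_mul]
    have hXSP : X * (S * P) = Real.sqrt θ • (P * (S * P)) - (a / Real.sqrt θ) • (S * P) := by
      rw [hXdef, Matrix.sub_mul, Matrix.smul_mul, Matrix.smul_mul, Matrix.one_mul]
    have hSX : S * X = Real.sqrt θ • (S * P) - (a / Real.sqrt θ) • S := by
      rw [hXdef, Matrix.mul_sub, Matrix.mul_smul, Matrix.mul_smul, Matrix.mul_one]
    calc X * (S * X) = X * (Real.sqrt θ • (S * P)) - X * ((a / Real.sqrt θ) • S) := by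
          rw [hSX, Matrix.mul_sub]
      _ = Real.sqrt θ • (X * (S * P)) - (a / Real.sqrt θ) • (X * S) := by
          rw [Matrix.mul_smul, Matrix.mul_smul]
      _ = θ • (P * (S * P)) + (a * a / θ) • S - a • (P * S) - a • (S * P) := by
          rw [hXSP, hXS, smul_sub, smul_sub, smul_smul, smul_smul, smul_smul, smul_smul,
            e1, e2, e3, e4]
          abel
  have hXpsd : (X * (S * X)).PosSemidef := by
    have := conjPSD X hS
    rwa [hXT, Matrix.mul_assoc] at this
  -- gap identity
  have hgap : ((1 + θ) • (P * (S * P)) + ((1 + θ⁻¹) * (a * a)) • S) - Pa * (S * Pa)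
      = X * (S * X) := by
    rw [hexp, hXexp]
    have hiv : (1 + θ⁻¹) * (a * a) = a * a / θ + a * a := by
      field_simp; ring
    rw [hiv]
    module
  have hGD : (((1 + θ) • (P * (S * P)) + ((1 + θ⁻¹) * (a * a)) • S) * D).trace
      = (1 + θ) * ((P * (S * P)) * D).trace + ((1 + θ⁻¹) * (a * a)) * (S * D).trace := by
    rw [Matrix.add_mul, Matrix.trace_add, Matrix.smul_mul, Matrix.trace_smul,
      Matrix.smul_mul, Matrix.trace_smul, smul_eq_mul, smul_eq_mul]
  have q3 : (D * (Pa * (S * Pa))).trace ≤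
      (1 + θ) * (D * (P * (S * P))).trace + ((1 + θ⁻¹) * (a * a)) * (D * S).trace := by
    have hmono := traceMul_mono (by rw [hgap]; exact hXpsd) hD.posSemidef
    rw [hGD] at hmono
    calc (D * (Pa * (S * Pa))).trace = ((Pa * (S * Pa)) * D).trace :=
          Matrix.trace_mul_comm _ _
      _ ≤ (1 + θ) * ((P * (S * P)) * D).trace + ((1 + θ⁻¹) * (a * a)) * (S * D).trace :=
          hmono
      _ = (1 + θ) * (D * (P * (S * P))).trace + ((1 + θ⁻¹) * (a * a)) * (D * S).trace := by
          rw [Matrix.trace_mul_comm D, Matrix.trace_mul_comm D]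
  -- q1
  have h5 : D * C = 1 - b • D := by
    have h6 : D * Cb = 1 := hDC
    rw [hCbdef, Matrix.mul_add, Matrix.mul_smul, Matrix.mul_one] at h6
    rw [eq_sub_iff_add_eq]
    exact h6
  have q1 : (D * (P * (S * P))).trace ≤ C.trace := by
    have hDCC : D * (C * C) = C - b • (D * C) := by
      calc D * (C * C) = (D * C) * C := by rw [Matrix.mul_assoc]
        _ = (1 - b • D) * C := by rw [h5]
        _ = C - b • (D * C) := by
            rw [Matrix.sub_mul, Matrix.one_mul, Matrix.smul_mul]
    have h7 : 0 ≤ (D * C).trace := traceMul_nonneg hD.posSemidef hCsd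
    rw [← hCC, hDCC, Matrix.trace_sub, Matrix.trace_smul, smul_eq_mul]
    nlinarith
  -- q2
  have q2 : (D * S).trace ≤ b⁻¹ * S.trace := by
    have hCh : (hCsd.sqrt).PosSemidef := hCsd.posSemidef_sqrt
    set Ch := hCsd.sqrt with hChdef
    have hChT : Chᵀ = Ch := hermT hCh.1
    have hChCh : Ch * Ch = C := hCsd.sqrt_mul_self
    have hDCh : (D * Ch)ᵀ = Ch * D := by rw [Matrix.transpose_mul, hDT, hChT]
    have hpsd0 : ((D * Ch) * Cb * (Ch * D)).PosSemidef := by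
      have := conjPSD (D * Ch) hCb.posSemidef
      rwa [hDCh] at this
    have hCh4 : Ch * (C * Ch) = C * C := by
      conv_lhs => rw [← hChCh]
      conv_rhs => rw [← hChCh]
      simp only [Matrix.mul_assoc]
    have hinner : Ch * (Cb * Ch) = C * Cb := by
      calc Ch * (Cb * Ch) = Ch * (C * Ch) + b • (Ch * Ch) := by
            rw [hCbdef, Matrix.add_mul, Matrix.smul_mul, Matrix.one_mul, Matrix.mul_add,
              Matrix.mul_smul]
        _ = C * C + b • C := by rw [hCh4, hChCh]
        _ = C * Cb := by rw [hCbdef, Matrix.mul_add, Matrix.mul_smul, Matrix.mul_one]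
    have hkey : (D * Ch) * Cb * (Ch * D) = D * C := by
      calc (D * Ch) * Cb * (Ch * D) = D * ((Ch * (Cb * Ch)) * D) := by
            simp only [Matrix.mul_assoc]
        _ = D * ((C * Cb) * D) := by rw [hinner]
        _ = D * (C * (Cb * D)) := by rw [Matrix.mul_assoc]
        _ = D * C := by rw [hCD, Matrix.mul_one]
    have hDCpsd : (D * C).PosSemidef := by rw [← hkey]; exact hpsd0
    have hfold : b⁻¹ • (D * C) = b⁻¹ • (1 : Matrix (Fin d) (Fin d) ℝ) - D := by
      rw [h5, smul_sub, smul_smul, inv_mul_cancel₀ hb.ne', one_smul]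
    have hbD : ((b⁻¹ • (1 : Matrix (Fin d) (Fin d) ℝ)) - D).PosSemidef := by
      have := smulPSD (inv_nonneg.mpr hb.le) hDCpsd
      rwa [hfold] at this
    have := traceMul_mono hbD hS
    rwa [Matrix.smul_mul, Matrix.one_mul, Matrix.trace_smul, smul_eq_mul] at this
  -- q5
  set F := Pa⁻¹ * (B * Pa⁻¹) with hFdef
  have hT3 : ((Pa * D * Pa)⁻¹ * B).trace = (Cb * F).trace := by
    rw [hZinv, hFdef]
    simp only [Matrix.mul_assoc]
    rw [Matrix.trace_mul_comm]
    simp only [Matrix.mul_assoc]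
  have hF : F.PosSemidef := by
    have := conjPSD Pa⁻¹ hB
    rw [hPaiT, Matrix.mul_assoc] at this
    exact this
  have hPaPa : Pa * Pa = B + ((2 * a) • P + (a * a) • (1 : Matrix (Fin d) (Fin d) ℝ)) := by
    rw [hPadef]
    simp only [Matrix.add_mul, Matrix.mul_add, Matrix.smul_mul, Matrix.mul_smul,
      Matrix.one_mul, Matrix.mul_one, smul_smul, smul_add]
    rw [hPP, show ((2 * a) • P : Matrix (Fin d) (Fin d) ℝ) = a • P + a • P from by
      rw [two_mul, add_smul]]
    abel
  have hone : (1 : Matrix (Fin d) (Fin d) ℝ) = Pa⁻¹ * ((Pa * Pa) * Pa⁻¹) := by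
    rw [Matrix.mul_assoc Pa Pa, hPaR, Matrix.mul_one, hPaL]
  have h1F : ((1 : Matrix (Fin d) (Fin d) ℝ) - F).PosSemidef := by
    have hgap2 : (1 : Matrix (Fin d) (Fin d) ℝ) - F
        = Pa⁻¹ * ((((2 * a) • P + (a * a) • (1 : Matrix (Fin d) (Fin d) ℝ))) * Pa⁻¹) := by
      calc (1 : Matrix (Fin d) (Fin d) ℝ) - F
          = Pa⁻¹ * ((Pa * Pa) * Pa⁻¹) - Pa⁻¹ * (B * Pa⁻¹) := by rw [← hone, hFdef]
        _ = Pa⁻¹ * (((Pa * Pa) * Pa⁻¹) - (B * Pa⁻¹)) := by rw [Matrix.mul_sub]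
        _ = Pa⁻¹ * (((Pa * Pa) - B) * Pa⁻¹) := by rw [Matrix.sub_mul]
        _ = Pa⁻¹ * ((((2 * a) • P + (a * a) • (1 : Matrix (Fin d) (Fin d) ℝ))) * Pa⁻¹) := by
            rw [hPaPa, add_sub_cancel_left]
    rw [hgap2]
    have hG : (((2 * a) • P + (a * a) • (1 : Matrix (Fin d) (Fin d) ℝ))).PosSemidef :=
      Matrix.PosSemidef.add (smulPSD (by positivity) hPsd)
        (smulPSD (by positivity) Matrix.PosSemidef.one)
    have := conjPSD Pa⁻¹ hG
    rw [hPaiT, Matrix.mul_assoc] at this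
    exact this
  have q5 : ((Pa * D * Pa)⁻¹ * B).trace ≤ C.trace + b * ↑d := by
    rw [hT3]
    have hCbF : Cb * F = C * F + b • F := by
      rw [hCbdef, Matrix.add_mul, Matrix.smul_mul, Matrix.one_mul]
    have hCF : (C * F).trace ≤ C.trace := by
      have h8 := traceMul_mono h1F hCsd
      rw [Matrix.one_mul] at h8
      rw [Matrix.trace_mul_comm]
      exact h8
    have hTrF : F.trace ≤ ↑d := by
      have h9 := traceMul_mono h1F Matrix.PosSemidef.one
      rw [Matrix.one_mul, Matrix.mul_one, Matrix.trace_one] at h9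
      simpa using h9
    rw [hCbF, Matrix.trace_add, Matrix.trace_smul, smul_eq_mul]
    have := mul_le_mul_of_nonneg_left hTrF hb.le
    linarith
  -- numeric bounds
  have n1 : θ * C.trace ≤ δ / 3 := by
    rw [hθdef, div_mul_eq_mul_div, div_le_div_iff₀ (by positivity) (by norm_num)]
    nlinarith
  have n2 : b * (↑d : ℝ) ≤ δ / 3 := by
    have hdn : (0:ℝ) ≤ (d:ℝ) := Nat.cast_nonneg d
    rw [hbdef, div_mul_eq_mul_div, div_le_div_iff₀ (by positivity) (by norm_num)]
    nlinarith
  have n3 : (1 + θ⁻¹) * (a * a) * (b⁻¹ * S.trace) ≤ δ / 3 := by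
    have h1θ : 1 + θ⁻¹ = (θ + 1) / θ := by field_simp
    have heq : (θ + 1) / θ * (θ * b * δ / (3 * (θ + 1) * (S.trace + 1))) * (b⁻¹ * S.trace)
        = δ * S.trace / (3 * (S.trace + 1)) := by
      field_simp
    rw [h1θ, ha2, heq, div_le_div_iff₀ (by positivity) (by norm_num)]
    nlinarith
  have q6 : (1 + θ) * (D * (P * (S * P))).trace ≤ (1 + θ) * C.trace :=
    mul_le_mul_of_nonneg_left q1 (by positivity)
  have q7 : ((1 + θ⁻¹) * (a * a)) * (D * S).trace
      ≤ ((1 + θ⁻¹) * (a * a)) * (b⁻¹ * S.trace) :=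
    mul_le_mul_of_nonneg_left q2 (by positivity)
  have e5 : (1 + θ) * C.trace = C.trace + θ * C.trace := by ring
  linarith [q3, q4, q5, q6, q7, n1, n2, n3, e5]

lemma set_eq {B : Matrix (Fin d) (Fin d) ℝ} (hB : B.PosSemidef) (ρ : ℝ) :
    {S : Matrix (Fin d) (Fin d) ℝ | S.PosSemidef ∧
        (S + B - 2 • psdSqrt (psdSqrt B * S * psdSqrt B)).trace ≤ ρ ^ 2}
      = {S : Matrix (Fin d) (Fin d) ℝ | S.PosSemidef} ∩
        ⋂ (Z : Matrix (Fin d) (Fin d) ℝ) (_ : Z.PosDef),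
          {S | S.trace + B.trace - ρ ^ 2 ≤ (Z * S).trace + (Z⁻¹ * B).trace} := by
  have hexp : ∀ S : Matrix (Fin d) (Fin d) ℝ,
      (S + B - 2 • psdSqrt (psdSqrt B * S * psdSqrt B)).trace
        = S.trace + B.trace - 2 * (psdSqrt (psdSqrt B * S * psdSqrt B)).trace := by
    intro S
    rw [Matrix.trace_sub, Matrix.trace_add, Matrix.trace_smul, nsmul_eq_mul]
    norm_num
  ext S
  simp only [Set.mem_setOf_eq, Set.mem_inter_iff, Set.mem_iInter]
  constructor
  · rintro ⟨hS, htr⟩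
    refine ⟨hS, fun Z hZ => ?_⟩
    have hlb := key_lb hB hS hZ
    rw [hexp S] at htr
    linarith
  · rintro ⟨hS, hall⟩
    refine ⟨hS, ?_⟩
    have hub : S.trace + B.trace - ρ ^ 2
        ≤ 2 * (psdSqrt (psdSqrt B * S * psdSqrt B)).trace := by
      refine le_of_forall_pos_le_add fun δ hδ => ?_
      obtain ⟨Z, hZ, hZle⟩ := key_ub hB hS hδ
      exact le_trans (hall Z hZ) hZle
    rw [hexp S]
    linarith

lemma trace_bound {B : Matrix (Fin d) (Fin d) ℝ} (hB : B.PosSemidef) {ρ : ℝ}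
    (hρ : 0 ≤ ρ) {S : Matrix (Fin d) (Fin d) ℝ} (hS : S.PosSemidef)
    (h : ∀ Z : Matrix (Fin d) (Fin d) ℝ, Z.PosDef →
      S.trace + B.trace - ρ ^ 2 ≤ (Z * S).trace + (Z⁻¹ * B).trace) :
    S.trace ≤ (ρ + Real.sqrt B.trace) ^ 2 := by
  have hx : 0 ≤ S.trace := tracePSD_nonneg hS
  have hβ : 0 ≤ B.trace := tracePSD_nonneg hB
  have key : ∀ t : ℝ, 0 < t →
      S.trace + B.trace - ρ ^ 2 ≤ t * S.trace + t⁻¹ * B.trace := by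
    intro t ht
    have h1 := h (t • 1) (smulOnePD ht)
    have hinv : (t • (1 : Matrix (Fin d) (Fin d) ℝ))⁻¹ = t⁻¹ • 1 := by
      apply Matrix.inv_eq_right_inv
      rw [Matrix.smul_mul, Matrix.mul_smul, Matrix.one_mul, smul_smul,
        mul_inv_cancel₀ ht.ne', one_smul]
    rwa [hinv, Matrix.smul_mul, Matrix.one_mul, Matrix.trace_smul, smul_eq_mul,
      Matrix.smul_mul, Matrix.one_mul, Matrix.trace_smul, smul_eq_mul] at h1
  rcases eq_or_lt_of_le hx with hx0 | hx0
  · rw [← hx0]; positivity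
  · have hsx : 0 < Real.sqrt S.trace := Real.sqrt_pos.mpr hx0
    have h2 : S.trace + B.trace - ρ ^ 2
        ≤ 2 * Real.sqrt B.trace * Real.sqrt S.trace := by
      refine le_of_forall_pos_le_add fun ε hε => ?_
      obtain ⟨ε', hε'pos, hε'⟩ : ∃ u : ℝ, 0 < u ∧ u = ε / Real.sqrt S.trace :=
        ⟨_, by positivity, rfl⟩
      obtain ⟨t, ht, htdef⟩ : ∃ u : ℝ, 0 < u ∧
          u = (Real.sqrt B.trace + ε') / Real.sqrt S.trace := ⟨_, by positivity, rfl⟩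
      have h3 := key t ht
      have e1 : t * S.trace = (Real.sqrt B.trace + ε') * Real.sqrt S.trace := by
        rw [htdef, div_mul_eq_mul_div, div_eq_iff hsx.ne', mul_assoc,
          Real.mul_self_sqrt hx]
      have e2 : t⁻¹ * B.trace ≤ Real.sqrt B.trace * Real.sqrt S.trace := by
        rw [htdef, inv_div, div_mul_eq_mul_div, div_le_iff₀ (by positivity)]
        have hbb : B.trace ≤ Real.sqrt B.trace * (Real.sqrt B.trace + ε') := by
          nlinarith [Real.sq_sqrt hβ, Real.sqrt_nonneg B.trace]
        nlinarith [Real.sqrt_nonneg S.trace, Real.sqrt_nonneg B.trace]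
      have e3 : ε' * Real.sqrt S.trace = ε := by
        rw [hε']
        field_simp
      have e4 : (Real.sqrt B.trace + ε') * Real.sqrt S.trace
          = Real.sqrt B.trace * Real.sqrt S.trace + ε' * Real.sqrt S.trace := by ring
      linarith
    have ex : Real.sqrt S.trace * Real.sqrt S.trace = S.trace := Real.mul_self_sqrt hx
    have eβ : Real.sqrt B.trace * Real.sqrt B.trace = B.trace := Real.mul_self_sqrt hβ
    have h4 : (Real.sqrt S.trace - Real.sqrt B.trace) ^ 2 ≤ ρ ^ 2 := by nlinarith
    have h5 : Real.sqrt S.trace - Real.sqrt B.trace ≤ ρ := by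
      have h6 := Real.sqrt_le_sqrt h4
      rw [Real.sqrt_sq_eq_abs, Real.sqrt_sq hρ] at h6
      calc Real.sqrt S.trace - Real.sqrt B.trace
          ≤ |Real.sqrt S.trace - Real.sqrt B.trace| := le_abs_self _
        _ ≤ ρ := h6
    nlinarith [Real.sqrt_nonneg S.trace, Real.sqrt_nonneg B.trace]

lemma psd_convex : Convex ℝ {S : Matrix (Fin d) (Fin d) ℝ | S.PosSemidef} := by
  intro S hS T hT p q hp hq hpq
  simp only [Set.mem_setOf_eq] at *
  exact Matrix.PosSemidef.add (smulPSD hp hS) (smulPSD hq hT)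

lemma halfspace_convex (B Z : Matrix (Fin d) (Fin d) ℝ) (c : ℝ) :
    Convex ℝ {S : Matrix (Fin d) (Fin d) ℝ |
      S.trace + B.trace - c ≤ (Z * S).trace + (Z⁻¹ * B).trace} := by
  intro S hS T hT p q hp hq hpq
  simp only [Set.mem_setOf_eq] at *
  have hq1 : q = 1 - p := by linarith
  subst hq1
  have e1 : (Z * (p • S + (1 - p) • T)).trace
      = p * (Z * S).trace + (1 - p) * (Z * T).trace := by
    rw [Matrix.mul_add, Matrix.trace_add, Matrix.mul_smul, Matrix.mul_smul,
      Matrix.trace_smul, Matrix.trace_smul, smul_eq_mul, smul_eq_mul]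
  have e2 : (p • S + (1 - p) • T).trace = p * S.trace + (1 - p) * T.trace := by
    rw [Matrix.trace_add, Matrix.trace_smul, Matrix.trace_smul, smul_eq_mul, smul_eq_mul]
  rw [e1, e2]
  have m1 := mul_le_mul_of_nonneg_left hS hp
  have m2 := mul_le_mul_of_nonneg_left hT hq
  nlinarith [m1, m2]

lemma psd_closed : IsClosed {S : Matrix (Fin d) (Fin d) ℝ | S.PosSemidef} := by
  have hset : {S : Matrix (Fin d) (Fin d) ℝ | S.PosSemidef} =
      {S : Matrix (Fin d) (Fin d) ℝ | Sᴴ = S} ∩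
        ⋂ x : Fin d → ℝ, {S | 0 ≤ star x ⬝ᵥ S *ᵥ x} := by
    ext S
    simp only [Set.mem_setOf_eq, Set.mem_inter_iff, Set.mem_iInter]
    exact Matrix.posSemidef_iff_dotProduct_mulVec
  rw [hset]
  refine IsClosed.inter ?_ (isClosed_iInter fun x => ?_)
  · exact isClosed_eq continuous_id.matrix_conjTranspose continuous_id
  · exact isClosed_le continuous_const
      (continuous_const.dotProduct (continuous_id.matrix_mulVec continuous_const))

lemma halfspace_closed (B Z : Matrix (Fin d) (Fin d) ℝ) (c : ℝ) :
    IsClosed {S : Matrix (Fin d) (Fin d) ℝ |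
      S.trace + B.trace - c ≤ (Z * S).trace + (Z⁻¹ * B).trace} := by
  refine isClosed_le ?_ ?_
  · exact ((continuous_id.matrix_trace).add continuous_const).sub continuous_const
  · exact ((continuous_const.matrix_mul continuous_id).matrix_trace).add continuous_const

lemma box_compact (R : ℝ) :
    IsCompact ((Set.univ.pi fun _ : Fin d => Set.univ.pi fun _ : Fin d =>
      Set.Icc (-R) R) : Set (Matrix (Fin d) (Fin d) ℝ)) :=
  isCompact_univ_pi fun _ => isCompact_univ_pi fun _ => isCompact_Icc

lemma entry_bound {S : Matrix (Fin d) (Fin d) ℝ} (hS : S.PosSemidef) {R : ℝ}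
    (hR : S.trace ≤ R) (i j : Fin d) : |S i j| ≤ R := by
  have htreq : S.trace = ∑ k, S k k := by simp [Matrix.trace, Matrix.diag]
  have hdiag : ∀ k, 0 ≤ S k k := fun k => by
    have := hS.dotProduct_mulVec_nonneg (Pi.single k 1)
    simpa [Matrix.mulVec_single, single_dotProduct] using this
  have hR0 : 0 ≤ R := le_trans (tracePSD_nonneg hS) hR
  by_cases hij : i = j
  · subst hij
    rw [abs_of_nonneg (hdiag i)]
    have : S i i ≤ ∑ k, S k k :=
      Finset.single_le_sum (f := fun k => S k k) (fun k _ => hdiag k) (Finset.mem_univ i)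
    rw [htreq] at hR
    linarith
  · have hsym : S j i = S i j := by
      have h2 : Sᵀ = S := hermT hS.1
      calc S j i = Sᵀ i j := rfl
        _ = S i j := by rw [h2]
    have key : ∀ c : ℝ, 0 ≤ S i i + c * S i j + c * S j i + c * (c * S j j) := by
      intro c
      have hq := hS.dotProduct_mulVec_nonneg (Pi.single i (1:ℝ) + Pi.single j c)
      simp only [star_trivial, Matrix.mulVec_add, add_dotProduct,
        dotProduct_add, Matrix.mulVec_single, single_dotProduct,
        mul_one, one_mul] at hq
      simp only [Pi.smul_apply, Matrix.col_apply, op_smul_eq_mul, mul_one] at hq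
      linarith
    have h1 := key 1
    have h2 := key (-1)
    have hsum : S i i + S j j ≤ S.trace := by
      have hpair : S i i + S j j = ∑ k ∈ ({i, j} : Finset (Fin d)), S k k := by
        rw [Finset.sum_pair hij]
      rw [hpair, htreq]
      exact Finset.sum_le_sum_of_subset_of_nonneg (Finset.subset_univ _)
        (fun k _ _ => hdiag k)
    rw [abs_le]
    constructor <;> nlinarith [hdiag i, hdiag j]

end GelbrichAux

/-- The Gelbrich ball of covariance matrices is trace-bounded,
convex and compact. -/
theorem gelbrich_ball_compact {d : ℕ} (Shat : Matrix (Fin d) (Fin d) ℝ)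
    (hShat : Shat.PosSemidef) (ρ : ℝ) (hρ : 0 ≤ ρ) :
    (∀ S ∈ {S : Matrix (Fin d) (Fin d) ℝ | S.PosSemidef ∧
        (S + Shat - 2 • psdSqrt (psdSqrt Shat * S * psdSqrt Shat)).trace ≤ ρ ^ 2},
      S.trace ≤ (ρ + Real.sqrt Shat.trace) ^ 2) ∧
    Convex ℝ {S : Matrix (Fin d) (Fin d) ℝ | S.PosSemidef ∧
        (S + Shat - 2 • psdSqrt (psdSqrt Shat * S * psdSqrt Shat)).trace ≤ ρ ^ 2} ∧
    IsCompact {S : Matrix (Fin d) (Fin d) ℝ | S.PosSemidef ∧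
        (S + Shat - 2 • psdSqrt (psdSqrt Shat * S * psdSqrt Shat)).trace ≤ ρ ^ 2} := by
  have hset := GelbrichAux.set_eq hShat ρ
  have hpart1 : ∀ S ∈ {S : Matrix (Fin d) (Fin d) ℝ | S.PosSemidef ∧
      (S + Shat - 2 • psdSqrt (psdSqrt Shat * S * psdSqrt Shat)).trace ≤ ρ ^ 2},
      S.trace ≤ (ρ + Real.sqrt Shat.trace) ^ 2 := by
    intro S hS
    rw [hset] at hS
    simp only [Set.mem_inter_iff, Set.mem_iInter, Set.mem_setOf_eq] at hS
    exact GelbrichAux.trace_bound hShat hρ hS.1 fun Z hZ => hS.2 Z hZ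
  refine ⟨hpart1, ?_, ?_⟩
  · rw [hset]
    exact GelbrichAux.psd_convex.inter (convex_iInter fun Z => convex_iInter fun hZ =>
      GelbrichAux.halfspace_convex Shat Z (ρ ^ 2))
  · have hclosed : IsClosed {S : Matrix (Fin d) (Fin d) ℝ | S.PosSemidef ∧
        (S + Shat - 2 • psdSqrt (psdSqrt Shat * S * psdSqrt Shat)).trace ≤ ρ ^ 2} := by
      rw [hset]
      exact GelbrichAux.psd_closed.inter (isClosed_iInter fun Z => isClosed_iInter fun hZ =>
        GelbrichAux.halfspace_closed Shat Z (ρ ^ 2))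
    refine IsCompact.of_isClosed_subset
      (GelbrichAux.box_compact ((ρ + Real.sqrt Shat.trace) ^ 2)) hclosed ?_
    intro S hS
    have hb := GelbrichAux.entry_bound hS.1 (hpart1 S hS)
    refine Set.mem_univ_pi.mpr fun i => Set.mem_univ_pi.mpr fun j => ?_
    exact Set.mem_Icc.mpr (abs_le.mp (hb i j))
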